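/- The number of noncrossing partitions of {1,…,n} into singletons and pair blocks, with each singleton of depth 0 or 1 and each pair block of depth 0, having exactly m pair blocks, is C(n, 2m), for 0 ≤ m ≤ ⌊n/2⌋. Consequently, ∑_{π ∈ NC_{1,2;1}(n)} α^{2·#pairs(π)} = ((1+α)^n + (1-α)^n)/2 for any real α. -/

import Mathlib

open scoped Classical

namespace NC121

variable {n : ℕ}

def ep (P : Finset (Fin n × Fin n)) : Finset (Fin n) := P.biUnion (fun p => {p.1, p.2})

def Valid (P : Finset (Fin n × Fin n)) : Prop :=
  (∀ p ∈ P, p.1 < p.2) ∧ (∀ p ∈ P, ∀ q ∈ P, p ≠ q → p.2 < q.1 ∨ q.2 < p.1)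

lemma mem_ep {P : Finset (Fin n × Fin n)} {s : Fin n} :
    s ∈ ep P ↔ ∃ p ∈ P, s = p.1 ∨ s = p.2 := by
  simp [ep, Finset.mem_biUnion]

lemma valid_subset {P Q : Finset (Fin n × Fin n)} (h : Valid Q) (hPQ : P ⊆ Q) : Valid P :=
  ⟨fun p hp => h.1 p (hPQ hp), fun p hp q hq hne => h.2 p (hPQ hp) q (hPQ hq) hne⟩

lemma card_ep {P : Finset (Fin n × Fin n)} (h : Valid P) : (ep P).card = 2 * P.card := by
  rw [ep, Finset.card_biUnion]
  · rw [Finset.sum_congr rfl (fun p hp => ?_), Finset.sum_const, smul_eq_mul, mul_comm]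
    rw [Finset.card_insert_of_notMem (by simp [(h.1 p hp).ne]), Finset.card_singleton]
  · intro p hp q hq hne
    rw [Function.onFun, Finset.disjoint_left]
    intro a ha hb
    simp only [Finset.mem_insert, Finset.mem_singleton] at ha hb
    have h1 := h.1 p hp
    have h2 := h.1 q hq
    simp only [Fin.lt_def] at h1 h2
    rcases h.2 p hp q hq hne with H | H <;> simp only [Fin.lt_def] at H <;>
      rcases ha with rfl | rfl <;> rcases hb with h' | h' <;>
        rw [Fin.ext_iff] at h' <;> omega


lemma no_between {P : Finset (Fin n × Fin n)} (h : Valid P) {p : Fin n × Fin n} (hp : p ∈ P) :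
    ∀ s ∈ ep P, ¬(p.1 < s ∧ s < p.2) := by
  intro s hs ⟨hs1, hs2⟩
  obtain ⟨q, hq, hsq⟩ := mem_ep.1 hs
  by_cases hqp : q = p
  · subst hqp
    rcases hsq with rfl | rfl
    · exact lt_irrefl _ hs1
    · exact lt_irrefl _ hs2
  · have hq12 := h.1 q hq
    rcases h.2 q hq p hp hqp with H | H
    · -- q.2 < p.1, so s ≤ q.2 < p.1 < s
      have : s ≤ q.2 := by rcases hsq with rfl | rfl; exact hq12.le; exact le_rfl
      exact absurd (this.trans_lt H) (not_lt.2 hs1.le)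
    · -- p.2 < q.1, so s ≥ q.1 > p.2 > s
      have : q.1 ≤ s := by rcases hsq with rfl | rfl; exact le_rfl; exact hq12.le
      exact absurd (H.trans_le this) (not_lt.2 hs2.le)

lemma filter_lt_fst {P : Finset (Fin n × Fin n)} (h : Valid P) {p : Fin n × Fin n}
    (hp : p ∈ P) : (ep P).filter (· < p.1) = ep (P.filter (fun q => q.2 < p.1)) := by
  ext s
  simp only [Finset.mem_filter, mem_ep]
  constructor
  · rintro ⟨⟨q, hq, hsq⟩, hs⟩
    refine ⟨q, ⟨hq, ?_⟩, hsq⟩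
    have hq12 := h.1 q hq
    have hqp : q ≠ p := by
      rintro rfl
      have hle : q.1 ≤ s := by rcases hsq with rfl | rfl; exact le_rfl; exact hq12.le
      exact absurd (hle.trans_lt hs) (lt_irrefl _)
    rcases h.2 q hq p hp hqp with H | H
    · exact H
    · have : q.1 ≤ s := by rcases hsq with rfl | rfl; exact le_rfl; exact hq12.le
      have := (h.1 p hp).trans (H.trans_le this)
      exact absurd (this.trans hs) (lt_irrefl _)
  · rintro ⟨q, ⟨hq, hq2⟩, hsq⟩
    refine ⟨⟨q, hq, hsq⟩, ?_⟩
    have hq12 := h.1 q hq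
    rcases hsq with rfl | rfl
    · exact hq12.trans hq2
    · exact hq2

lemma parity_fst {P : Finset (Fin n × Fin n)} (h : Valid P) {p : Fin n × Fin n} (hp : p ∈ P) :
    Even ((ep P).filter (· < p.1)).card := by
  rw [filter_lt_fst h hp, card_ep (valid_subset h (Finset.filter_subset _ _))]
  exact even_two_mul _

lemma mem_valid_iff {P : Finset (Fin n × Fin n)} (h : Valid P) {i j : Fin n} :
    (i, j) ∈ P ↔ i ∈ ep P ∧ j ∈ ep P ∧ i < j ∧ (∀ s ∈ ep P, ¬(i < s ∧ s < j)) ∧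
      Even ((ep P).filter (· < i)).card := by
  constructor
  · intro hij
    exact ⟨mem_ep.2 ⟨(i, j), hij, Or.inl rfl⟩, mem_ep.2 ⟨(i, j), hij, Or.inr rfl⟩,
      h.1 _ hij, no_between h hij, parity_fst h hij⟩
  · rintro ⟨hi, hj, hij, hbet, hev⟩
    obtain ⟨q, hq, hiq⟩ := mem_ep.1 hi
    have hq12 := h.1 q hq
    rcases hiq with rfl | rfl
    · -- i = q.1; show q.2 = j
      have hq2j : q.2 = j := by
        rcases lt_trichotomy q.2 j with H | H | H
        · exact absurd ⟨hq12, H⟩ (hbet q.2 (mem_ep.2 ⟨q, hq, Or.inr rfl⟩))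
        · exact H
        · exact absurd ⟨hij, H⟩ (no_between h hq j hj)
      have : q = (q.1, j) := by rw [← hq2j]
      rwa [← this]
    · -- i = q.2: parity contradiction
      exfalso
      have key : (ep P).filter (· < q.2) = insert q.1 ((ep P).filter (· < q.1)) := by
        ext s
        simp only [Finset.mem_filter, Finset.mem_insert]
        constructor
        · rintro ⟨hs, hlt⟩
          rcases lt_trichotomy s q.1 with H | H | H
          · exact Or.inr ⟨hs, H⟩
          · exact Or.inl H
          · exact absurd ⟨H, hlt⟩ (no_between h hq s hs)
        · rintro (rfl | ⟨hs, hlt⟩)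
          · exact ⟨mem_ep.2 ⟨q, hq, Or.inl rfl⟩, hq12⟩
          · exact ⟨hs, hlt.trans hq12⟩
      rw [key, Finset.card_insert_of_notMem (by simp)] at hev
      have := parity_fst h hq
      rcases hev with ⟨k, hk⟩
      rcases this with ⟨l, hl⟩
      omega

lemma ep_inj {P Q : Finset (Fin n × Fin n)} (hP : Valid P) (hQ : Valid Q)
    (h : ep P = ep Q) : P = Q := by
  ext ⟨i, j⟩
  rw [mem_valid_iff hP, mem_valid_iff hQ, h]


def pairup : List (Fin n) → Finset (Fin n × Fin n)
  | [] => ∅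
  | [_] => ∅
  | a :: b :: l => insert (a, b) (pairup l)

lemma pairup_mem : ∀ {l : List (Fin n)} {p : Fin n × Fin n},
    p ∈ pairup l → p.1 ∈ l ∧ p.2 ∈ l
  | [], p, hp => by simp [pairup] at hp
  | [_], p, hp => by simp [pairup] at hp
  | a :: b :: l, p, hp => by
    rw [pairup, Finset.mem_insert] at hp
    rcases hp with rfl | hp
    · simp
    · have := pairup_mem hp
      simp [this.1, this.2]

lemma valid_pairup : ∀ {l : List (Fin n)}, l.Pairwise (· < ·) → Valid (pairup l)
  | [], _ => ⟨by simp [pairup], by simp [pairup]⟩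
  | [_], _ => ⟨by simp [pairup], by simp [pairup]⟩
  | a :: b :: l, hl => by
    have hab : a < b := (List.pairwise_cons.1 hl).1 b (by simp)
    have hal : ∀ x ∈ l, a < x := fun x hx => (List.pairwise_cons.1 hl).1 x (by simp [hx])
    have hl' : (b :: l).Pairwise (· < ·) := (List.pairwise_cons.1 hl).2
    have hbl : ∀ x ∈ l, b < x := fun x hx => (List.pairwise_cons.1 hl').1 x hx
    have hll : l.Pairwise (· < ·) := (List.pairwise_cons.1 hl').2
    obtain ⟨ih1, ih2⟩ := valid_pairup hll
    constructor
    · intro p hp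
      rw [pairup, Finset.mem_insert] at hp
      rcases hp with rfl | hp
      · exact hab
      · exact ih1 p hp
    · intro p hp q hq hne
      rw [pairup, Finset.mem_insert] at hp hq
      rcases hp with rfl | hp <;> rcases hq with rfl | hq
      · exact absurd rfl hne
      · exact Or.inl (hbl q.1 (pairup_mem hq).1)
      · exact Or.inr (hbl p.1 (pairup_mem hp).1)
      · exact ih2 p hp q hq hne

lemma ep_pairup : ∀ {l : List (Fin n)}, Even l.length → ep (pairup l) = l.toFinset
  | [], _ => by simp [pairup, ep]
  | [_], h => by simp at h
  | a :: b :: l, h => by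
    have h' : Even l.length := by simpa [Nat.even_add_one] using h
    have ih := ep_pairup h'
    rw [pairup]
    unfold ep at ih ⊢
    rw [Finset.biUnion_insert, ih]
    ext x
    simp [or_assoc]

lemma card_pairup {l : List (Fin n)} (hl : l.Pairwise (· < ·)) (h : Even l.length) :
    2 * (pairup l).card = l.length := by
  rw [← card_ep (valid_pairup hl), ep_pairup h, List.card_toFinset,
    List.Nodup.dedup (hl.imp ne_of_lt)]

lemma ep_surj {S : Finset (Fin n)} (hS : Even S.card) :
    ∃ P : Finset (Fin n × Fin n), Valid P ∧ ep P = S ∧ 2 * P.card = S.card := by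
  refine ⟨pairup (S.sort (· ≤ ·)), valid_pairup ?_, ?_, ?_⟩
  · exact S.sortedLT_sort.pairwise
  · rw [ep_pairup (by rwa [Finset.length_sort]), Finset.sort_toFinset]
  · rw [card_pairup S.sortedLT_sort.pairwise (by rwa [Finset.length_sort]), Finset.length_sort]


lemma card_valid (n m : ℕ) :
    (Finset.univ.filter fun P : Finset (Fin n × Fin n) => Valid P ∧ P.card = m).card
      = Nat.choose n (2 * m) := by
  have : Nat.choose n (2 * m)
      = (Finset.powersetCard (2 * m) (Finset.univ : Finset (Fin n))).card := by
    rw [Finset.card_powersetCard, Finset.card_univ, Fintype.card_fin]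
  rw [this]
  apply Finset.card_bij (fun P _ => ep P)
  · intro P hP
    simp only [Finset.mem_filter] at hP
    rw [Finset.mem_powersetCard_univ, card_ep hP.2.1, hP.2.2]
  · intro P hP Q hQ h
    simp only [Finset.mem_filter] at hP hQ
    exact ep_inj hP.2.1 hQ.2.1 h
  · intro S hS
    rw [Finset.mem_powersetCard_univ] at hS
    obtain ⟨P, hv, hep, hcard⟩ := ep_surj (S := S) (by rw [hS]; exact even_two_mul m)
    exact ⟨P, by simp only [Finset.mem_filter]; exact ⟨Finset.mem_univ P, hv, by omega⟩, hep⟩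

lemma card_le_half {n : ℕ} {P : Finset (Fin n × Fin n)} (h : Valid P) : 2 * P.card ≤ n := by
  have := Finset.card_le_univ (ep P)
  rw [card_ep h] at this
  simpa using this

lemma binom_even (n : ℕ) (α : ℝ) :
    ∑ m ∈ Finset.range (n / 2 + 1), (n.choose (2 * m) : ℝ) * α ^ (2 * m)
      = ((1 + α) ^ n + (1 - α) ^ n) / 2 := by
  have h1 : (1 + α) ^ n = ∑ k ∈ Finset.range (n + 1), α ^ k * (n.choose k : ℝ) := by
    rw [add_comm, add_pow]
    simp
  have h2 : (1 - α) ^ n = ∑ k ∈ Finset.range (n + 1), (-α) ^ k * (n.choose k : ℝ) := by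
    rw [sub_eq_add_neg, add_comm, add_pow]
    simp
  have key : (1 + α) ^ n + (1 - α) ^ n
      = ∑ k ∈ Finset.range (n + 1), (α ^ k + (-α) ^ k) * (n.choose k : ℝ) := by
    rw [h1, h2, ← Finset.sum_add_distrib]
    congr 1; ext k; ring
  have himg : (Finset.range (n + 1)).filter Even
      = (Finset.range (n / 2 + 1)).image (fun m => 2 * m) := by
    ext k
    simp only [Finset.mem_filter, Finset.mem_range, Finset.mem_image, Nat.even_iff]
    constructor
    · rintro ⟨hk, he⟩
      exact ⟨k / 2, by omega, by omega⟩
    · rintro ⟨m, hm, rfl⟩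
      omega
  have hsub : ∑ k ∈ Finset.range (n + 1), (α ^ k + (-α) ^ k) * (n.choose k : ℝ)
      = ∑ k ∈ (Finset.range (n + 1)).filter Even, (α ^ k + (-α) ^ k) * (n.choose k : ℝ) := by
    refine (Finset.sum_subset (Finset.filter_subset _ _) ?_).symm
    intro k hk hk'
    simp only [Finset.mem_filter, hk, true_and] at hk'
    rw [(Nat.not_even_iff_odd.1 hk').neg_pow]
    ring
  rw [key, hsub, himg, Finset.sum_image (fun x _ y _ h => by omega), Finset.sum_div]
  refine Finset.sum_congr rfl fun m _ => ?_
  rw [(even_two_mul m).neg_pow]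
  ring

end NC121

open NC121

theorem count_NC121_pairs_and_generating_sum (n : ℕ) (α : ℝ) :
    (∀ m : ℕ, m ≤ n / 2 →
      Set.ncard {P : Finset (Fin n × Fin n) |
          (∀ p ∈ P, p.1 < p.2) ∧
          (∀ p ∈ P, ∀ q ∈ P, p ≠ q → p.2 < q.1 ∨ q.2 < p.1) ∧
          P.card = m}
        = Nat.choose n (2 * m)) ∧
    (∑ P ∈ Finset.univ.filter (fun P : Finset (Fin n × Fin n) =>
          (∀ p ∈ P, p.1 < p.2) ∧
          (∀ p ∈ P, ∀ q ∈ P, p ≠ q → p.2 < q.1 ∨ q.2 < p.1)),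
        α ^ (2 * P.card))
      = ((1 + α) ^ n + (1 - α) ^ n) / 2 := by
  constructor
  · intro m _
    have hset : {P : Finset (Fin n × Fin n) |
          (∀ p ∈ P, p.1 < p.2) ∧
          (∀ p ∈ P, ∀ q ∈ P, p ≠ q → p.2 < q.1 ∨ q.2 < p.1) ∧
          P.card = m}
        = ↑(Finset.univ.filter fun P : Finset (Fin n × Fin n) => Valid P ∧ P.card = m) := by
      ext P
      simp [Valid, and_assoc]
    rw [hset, Set.ncard_coe_finset, card_valid]
  · have hfil : Finset.univ.filter (fun P : Finset (Fin n × Fin n) =>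
          (∀ p ∈ P, p.1 < p.2) ∧
          (∀ p ∈ P, ∀ q ∈ P, p ≠ q → p.2 < q.1 ∨ q.2 < p.1))
        = Finset.univ.filter (fun P => Valid P) := by
      apply Finset.filter_congr
      intro P _
      simp [Valid]
    rw [hfil, ← Finset.sum_fiberwise_of_maps_to (g := Finset.card)
      (t := Finset.range (n / 2 + 1)) ?_, ← binom_even n α]
    · refine Finset.sum_congr rfl fun m _ => ?_
      rw [Finset.filter_filter]
      have : ∀ P ∈ Finset.univ.filter
          (fun P : Finset (Fin n × Fin n) => Valid P ∧ P.card = m),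
          α ^ (2 * P.card) = α ^ (2 * m) := by
        intro P hP
        simp only [Finset.mem_filter] at hP
        rw [hP.2.2]
      rw [Finset.sum_congr rfl this, Finset.sum_const, card_valid, nsmul_eq_mul]
    · intro P hP
      simp only [Finset.mem_filter] at hP
      have := card_le_half hP.2
      simp only [Finset.mem_range]
      omega
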